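/- Let φ be the merging of positive maps φ₁, φ₂ by means of B_i, C_i, ω_i, and assume φ is positive. If φ is 2-positive, then C₁ = 0 and C₂ = 0, and δ₁(η₁,y₁)δ₂(η₂,y₂) ≥ ε₁(η₁,y₁)ε₂(η₂,y₂) for all η_i ∈ K_i, y_i ∈ H_i (i = 1, 2). Analogously, if φ is 2-copositive, then B₁ = 0 and B₂ = 0 and the same inequality holds. -/

import Mathlib

open scoped ComplexOrder
open Matrix

noncomputable section
namespace Paper

/-- A map between matrix algebras is positive if it sends positive semidefinite
matrices to positive semidefinite matrices. -/
def IsPosMap {m n : Type*} [Fintype m] [Fintype n]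
    (φ : Matrix m m ℂ → Matrix n n ℂ) : Prop :=
  ∀ X : Matrix m m ℂ, X.PosSemidef → (φ X).PosSemidef

/-- The rank one operator `ηη*`, i.e. `ζ ↦ ⟨η, ζ⟩ η`. -/
def rankOne {m : Type*} (η : m → ℂ) : Matrix m m ℂ :=
  Matrix.vecMulVec η (star η)

/-- The Choi matrix `∑ E_{ij} ⊗ φ(E_{ij})` of a map `φ`. -/
def choi {m n : Type*} [Fintype m] [DecidableEq m]
    (φ : Matrix m m ℂ → Matrix n n ℂ) : Matrix (m × n) (m × n) ℂ :=
  Matrix.of fun p q => φ (Matrix.single p.1 q.1 1) p.2 q.2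

/-- A map is completely positive iff its Choi matrix is positive semidefinite. -/
def IsCP {m n : Type*} [Fintype m] [DecidableEq m] [Fintype n]
    (φ : Matrix m m ℂ → Matrix n n ℂ) : Prop :=
  (choi φ).PosSemidef

/-- A map is completely copositive iff `X ↦ φ(Xᵀ)` is completely positive. -/
def IsCCP {m n : Type*} [Fintype m] [DecidableEq m] [Fintype n]
    (φ : Matrix m m ℂ → Matrix n n ℂ) : Prop :=
  IsCP fun X => φ Xᵀ

/-- A map is decomposable iff it is the sum of a completely positive and a
completely copositive (linear) map. -/
def Decomposable {m n : Type*} [Fintype m] [DecidableEq m] [Fintype n]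
    (φ : Matrix m m ℂ → Matrix n n ℂ) : Prop :=
  ∃ φ₁ φ₂ : Matrix m m ℂ →ₗ[ℂ] Matrix n n ℂ,
    IsCP (⇑φ₁) ∧ IsCCP (⇑φ₂) ∧ ∀ X, φ X = φ₁ X + φ₂ X

/-- The ampliation `id_{M₂(ℂ)} ⊗ φ`. -/
def ampl2 {m n : Type*} (φ : Matrix m m ℂ → Matrix n n ℂ)
    (Y : Matrix (Fin 2 × m) (Fin 2 × m) ℂ) : Matrix (Fin 2 × n) (Fin 2 × n) ℂ :=
  Matrix.of fun p q => φ (Matrix.of fun a b => Y (p.1, a) (q.1, b)) p.2 q.2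

/-- The ampliation `tran_{M₂(ℂ)} ⊗ φ`. -/
def ampl2T {m n : Type*} (φ : Matrix m m ℂ → Matrix n n ℂ)
    (Y : Matrix (Fin 2 × m) (Fin 2 × m) ℂ) : Matrix (Fin 2 × n) (Fin 2 × n) ℂ :=
  Matrix.of fun p q => φ (Matrix.of fun a b => Y (q.1, a) (p.1, b)) p.2 q.2

/-- `φ` is 2-positive if `id_{M₂(ℂ)} ⊗ φ` is positive. -/
def Is2Pos {m n : Type*} [Fintype m] [Fintype n]
    (φ : Matrix m m ℂ → Matrix n n ℂ) : Prop :=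
  IsPosMap (ampl2 φ)

/-- `φ` is 2-copositive if `tran_{M₂(ℂ)} ⊗ φ` is positive. -/
def Is2Copos {m n : Type*} [Fintype m] [Fintype n]
    (φ : Matrix m m ℂ → Matrix n n ℂ) : Prop :=
  IsPosMap (ampl2T φ)

/-- A positive map `φ` is exposed if every positive (linear) map `ψ` vanishing
(in the sense `⟨y, ψ(ηη*) y⟩ = 0`) wherever `φ` vanishes is a nonnegative
multiple of `φ`. -/
def IsExposed {m n : Type*} [Fintype m] [Fintype n]
    (φ : Matrix m m ℂ → Matrix n n ℂ) : Prop :=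
  IsPosMap φ ∧
    ∀ ψ : Matrix m m ℂ →ₗ[ℂ] Matrix n n ℂ, IsPosMap ⇑ψ →
      (∀ (η : m → ℂ) (y : n → ℂ),
        star y ⬝ᵥ (φ (rankOne η)).mulVec y = 0 →
          star y ⬝ᵥ (ψ (rankOne η)).mulVec y = 0) →
      ∃ c : ℝ, 0 ≤ c ∧ ∀ X, ψ X = (c : ℂ) • φ X

/-- A positive map `φ` is optimal if there is no nonzero completely positive map
`ψ` with `φ − ψ` positive. -/
def IsOptimal {m n : Type*} [Fintype m] [DecidableEq m] [Fintype n]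
    (φ : Matrix m m ℂ → Matrix n n ℂ) : Prop :=
  ¬∃ ψ : Matrix m m ℂ →ₗ[ℂ] Matrix n n ℂ,
      ψ ≠ 0 ∧ IsCP (⇑ψ) ∧ IsPosMap fun X => φ X - ψ X

/-- The index type of the direct sum `ℂᵃ ⊕ ℂᵇ ⊕ ℂ`. -/
abbrev TI (a b : ℕ) := Fin a ⊕ (Fin b ⊕ Unit)

/-- The index of the distinguished one-dimensional summand. -/
def tidx {a b : ℕ} : TI a b := Sum.inr (Sum.inr ())

/-- Block `X₁₁` of a matrix on `ℂᵃ ⊕ ℂᵇ ⊕ ℂ`. -/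
def blk11 {a b : ℕ} (X : Matrix (TI a b) (TI a b) ℂ) : Matrix (Fin a) (Fin a) ℂ :=
  Matrix.of fun i j => X (Sum.inl i) (Sum.inl j)

/-- Block `X₂₂`. -/
def blk22 {a b : ℕ} (X : Matrix (TI a b) (TI a b) ℂ) : Matrix (Fin b) (Fin b) ℂ :=
  Matrix.of fun i j => X (Sum.inr (Sum.inl i)) (Sum.inr (Sum.inl j))

/-- Block `X₁₃`, viewed as a column vector. -/
def blk13 {a b : ℕ} (X : Matrix (TI a b) (TI a b) ℂ) : Fin a → ℂ :=
  fun i => X (Sum.inl i) tidx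

/-- Block `X₃₁` (equivalently, the vector `X₃₁ᵀ`). -/
def blk31 {a b : ℕ} (X : Matrix (TI a b) (TI a b) ℂ) : Fin a → ℂ :=
  fun i => X tidx (Sum.inl i)

/-- Block `X₂₃`, viewed as a column vector. -/
def blk23 {a b : ℕ} (X : Matrix (TI a b) (TI a b) ℂ) : Fin b → ℂ :=
  fun i => X (Sum.inr (Sum.inl i)) tidx

/-- Block `X₃₂` (equivalently, the vector `X₃₂ᵀ`). -/
def blk32 {a b : ℕ} (X : Matrix (TI a b) (TI a b) ℂ) : Fin b → ℂ :=
  fun i => X tidx (Sum.inr (Sum.inl i))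

/-- `P` is the orthogonal projection onto the range of `A`: it is Hermitian,
idempotent, and has the same range as `A`. -/
def IsOrthProjOnRange {n m : Type*} [Fintype n] [Fintype m]
    (P : Matrix n n ℂ) (A : Matrix n m ℂ) : Prop :=
  P.IsHermitian ∧ P * P = P ∧
    LinearMap.range P.mulVecLin = LinearMap.range A.mulVecLin

/-- The merging of the maps `φ₁`, `φ₂` by means of the operators `B₁, C₁, B₂, C₂`,
the functionals `ω₁, ω₂`, with `P₁, P₂` the orthogonal projections onto the ranges
of `φ₁(1)`, `φ₂(1)`. -/
def merging {k₁ k₂ h₁ h₂ : ℕ}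
    (φ₁ : Matrix (Fin k₁) (Fin k₁) ℂ →ₗ[ℂ] Matrix (Fin h₁) (Fin h₁) ℂ)
    (φ₂ : Matrix (Fin k₂) (Fin k₂) ℂ →ₗ[ℂ] Matrix (Fin h₂) (Fin h₂) ℂ)
    (B₁ C₁ : Matrix (Fin h₁) (Fin k₁) ℂ) (B₂ C₂ : Matrix (Fin h₂) (Fin k₂) ℂ)
    (ω₁ : Matrix (Fin k₁) (Fin k₁) ℂ →ₗ[ℂ] ℂ) (ω₂ : Matrix (Fin k₂) (Fin k₂) ℂ →ₗ[ℂ] ℂ)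
    (P₁ : Matrix (Fin h₁) (Fin h₁) ℂ) (P₂ : Matrix (Fin h₂) (Fin h₂) ℂ)
    (X : Matrix (TI k₁ k₂) (TI k₁ k₂) ℂ) : Matrix (TI h₁ h₂) (TI h₁ h₂) ℂ :=
  Matrix.of fun p q =>
    match p, q with
    | Sum.inl a, Sum.inl b => φ₁ (blk11 X) a b + ω₂ (blk22 X) * P₁ a b
    | Sum.inl _, Sum.inr (Sum.inl _) => 0
    | Sum.inl a, Sum.inr (Sum.inr _) => (B₁.mulVec (blk13 X) + C₁.mulVec (blk31 X)) a
    | Sum.inr (Sum.inl _), Sum.inl _ => 0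
    | Sum.inr (Sum.inl a), Sum.inr (Sum.inl b) => φ₂ (blk22 X) a b + ω₁ (blk11 X) * P₂ a b
    | Sum.inr (Sum.inl a), Sum.inr (Sum.inr _) => (B₂.mulVec (blk23 X) + C₂.mulVec (blk32 X)) a
    | Sum.inr (Sum.inr _), Sum.inl b =>
        (Matrix.vecMul (blk31 X) B₁ᴴ + Matrix.vecMul (blk13 X) C₁ᴴ) b
    | Sum.inr (Sum.inr _), Sum.inr (Sum.inl b) =>
        (Matrix.vecMul (blk32 X) B₂ᴴ + Matrix.vecMul (blk23 X) C₂ᴴ) b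
    | Sum.inr (Sum.inr _), Sum.inr (Sum.inr _) => X tidx tidx

/-- The quantity `μᵢ(η, y) = √⟨y, φᵢ(ηη*) y⟩`. -/
def muQ {k h : ℕ} (φ : Matrix (Fin k) (Fin k) ℂ →ₗ[ℂ] Matrix (Fin h) (Fin h) ℂ)
    (η : Fin k → ℂ) (y : Fin h → ℂ) : ℝ :=
  Real.sqrt (star y ⬝ᵥ (φ (rankOne η)).mulVec y).re

/-- The quantity `εᵢ(η, y) = |⟨y, Bη⟩| + |⟨y, C η̄⟩|`. -/
def epsQ {k h : ℕ} (B C : Matrix (Fin h) (Fin k) ℂ) (η : Fin k → ℂ) (y : Fin h → ℂ) : ℝ :=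
  ‖star y ⬝ᵥ B.mulVec η‖ + ‖star y ⬝ᵥ C.mulVec (star η)‖

/-- The quantity `δᵢ(η, y) = √(μᵢ(η,y)² − εᵢ(η,y)²)`. -/
def deltaQ {k h : ℕ} (φ : Matrix (Fin k) (Fin k) ℂ →ₗ[ℂ] Matrix (Fin h) (Fin h) ℂ)
    (B C : Matrix (Fin h) (Fin k) ℂ) (η : Fin k → ℂ) (y : Fin h → ℂ) : ℝ :=
  Real.sqrt (muQ φ η y ^ 2 - epsQ B C η y ^ 2)

/-- The quantity `σᵢ(η, y) = √(ωᵢ(ηη*))·‖P y‖`. -/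
def sigmaQ {k h : ℕ} (ω : Matrix (Fin k) (Fin k) ℂ →ₗ[ℂ] ℂ)
    (P : Matrix (Fin h) (Fin h) ℂ) (η : Fin k → ℂ) (y : Fin h → ℂ) : ℝ :=
  Real.sqrt (ω (rankOne η)).re * Real.sqrt (star (P.mulVec y) ⬝ᵥ P.mulVec y).re

-- AUX START
section Aux

lemma rankOne_posSemidef {m : Type*} [Fintype m] (η : m → ℂ) : (rankOne η).PosSemidef := by
  refine posSemidef_iff_dotProduct_mulVec.mpr ⟨?_, ?_⟩
  · ext i j
    simp [rankOne, vecMulVec, conjTranspose, mul_comm]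
  · intro x
    have h : star x ⬝ᵥ (rankOne η).mulVec x = star (star η ⬝ᵥ x) * (star η ⬝ᵥ x) := by
      simp only [rankOne, dotProduct, mulVec, vecMulVec_apply, Pi.star_apply, dotProduct,
        star_sum, star_mul', star_star, Finset.mul_sum, Finset.sum_mul]
      rw [Finset.sum_comm]
      refine Finset.sum_congr rfl fun i _ => Finset.sum_congr rfl fun j _ => by ring
    rw [h]
    exact star_mul_self_nonneg _

lemma herm_dot {N : Type*} [Fintype N] {W : Matrix N N ℂ} (hW : W.IsHermitian)
    (a b : N → ℂ) : star b ⬝ᵥ W.mulVec a = star (star a ⬝ᵥ W.mulVec b) := by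
  rw [star_dotProduct, Matrix.star_mulVec, ← Matrix.dotProduct_mulVec, hW.eq]

lemma psd_cs {N : Type*} [Fintype N] {W : Matrix N N ℂ} (hW : W.PosSemidef) (a b : N → ℂ) :
    ‖star a ⬝ᵥ W.mulVec b‖ ^ 2 ≤
      (star a ⬝ᵥ W.mulVec a).re * (star b ⬝ᵥ W.mulVec b).re := by
  have hre : ∀ v : N → ℂ, 0 ≤ (star v ⬝ᵥ W.mulVec v).re := fun v => (Complex.le_def.mp (hW.dotProduct_mulVec_nonneg v)).1
  set β := star a ⬝ᵥ W.mulVec b with hβ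
  by_cases hb : β = 0
  · simp [hb]
    exact mul_nonneg (hre a) (hre b)
  · have habs : (0:ℝ) < ‖β‖ := norm_pos_iff.mpr hb
    have hcb : (starRingEnd ℂ) β * β = ((‖β‖ : ℝ) : ℂ) * ((‖β‖ : ℝ) : ℂ) := by
      rw [mul_comm, Complex.mul_conj, Complex.normSq_eq_norm_sq]
      push_cast; ring
    have key : ∀ t : ℝ, 0 ≤ (star b ⬝ᵥ W.mulVec b).re * (t * t) + (2 * ‖β‖) * t
        + (star a ⬝ᵥ W.mulVec a).re := by
      intro t
      set l : ℂ := (t : ℂ) * ((starRingEnd ℂ) β / (‖β‖ : ℂ)) with hl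
      have hq := hW.dotProduct_mulVec_nonneg (a + l • b)
      have hexp : star (a + l • b) ⬝ᵥ W.mulVec (a + l • b)
          = star a ⬝ᵥ W.mulVec a + l * β + star l * star β + (l * star l) * (star b ⬝ᵥ W.mulVec b) := by
        rw [star_add, star_smul, Matrix.mulVec_add, Matrix.mulVec_smul]
        simp only [dotProduct_add, add_dotProduct, dotProduct_smul, smul_dotProduct,
          smul_eq_mul]
        rw [herm_dot hW.1 a b, ← hβ]
        ring
      have hlb : l * β = ((t * ‖β‖ : ℝ) : ℂ) := by
        rw [hl]
        field_simp
        rw [mul_assoc, hcb]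
        push_cast; ring
      have hll : l * star l = ((t * t : ℝ) : ℂ) := by
        rw [hl]
        simp only [star_mul', RCLike.star_def, Complex.conj_ofReal, map_div₀, Complex.conj_conj,
          _root_.map_mul]
        field_simp
        ring_nf
        rw [mul_assoc, hcb]
        push_cast; ring
      have him : star l * star β = ((t * ‖β‖ : ℝ) : ℂ) := by
        have h2 := congrArg star hlb
        rw [star_mul', mul_comm] at h2
        rw [Complex.star_def, Complex.conj_ofReal] at h2
        simpa only [RCLike.star_def, mul_comm] using h2
      rw [hexp, hlb, hll, him] at hq
      have := (Complex.le_def.mp hq).1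
      simp only [Complex.add_re, Complex.ofReal_re, Complex.mul_re, Complex.ofReal_im,
        Complex.zero_re] at this ⊢
      nlinarith [this]
    have hd := discrim_le_zero key
    rw [discrim] at hd
    nlinarith [hd, Complex.sq_norm β]

lemma two_pos_cs {m n : Type*} [Fintype m] [Fintype n]
    {φ : Matrix m m ℂ → Matrix n n ℂ} (h : Is2Pos φ) (u v : m → ℂ) (x z : n → ℂ) :
    ‖star x ⬝ᵥ (φ (vecMulVec u (star v))).mulVec z‖ ^ 2 ≤
      (star x ⬝ᵥ (φ (rankOne u)).mulVec x).re * (star z ⬝ᵥ (φ (rankOne v)).mulVec z).re := by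
  set ζ : Fin 2 × m → ℂ := fun p => ![u, v] p.1 p.2 with hζ
  have hpsd : (ampl2 φ (rankOne ζ)).PosSemidef := h _ (rankOne_posSemidef ζ)
  set a : Fin 2 × n → ℂ := fun p => ![x, 0] p.1 p.2 with ha
  set b : Fin 2 × n → ℂ := fun p => ![0, z] p.1 p.2 with hb
  have hb00 : (Matrix.of fun (i j : m) => rankOne ζ ((0 : Fin 2), i) ((0 : Fin 2), j)) = rankOne u := by
    ext i j; simp [rankOne, vecMulVec, hζ]
  have hb01 : (Matrix.of fun (i j : m) => rankOne ζ ((0 : Fin 2), i) ((1 : Fin 2), j))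
      = vecMulVec u (star v) := by
    ext i j; simp [rankOne, vecMulVec, hζ]
  have hb11 : (Matrix.of fun (i j : m) => rankOne ζ ((1 : Fin 2), i) ((1 : Fin 2), j)) = rankOne v := by
    ext i j; simp [rankOne, vecMulVec, hζ]
  have h1 : star a ⬝ᵥ (ampl2 φ (rankOne ζ)).mulVec a = star x ⬝ᵥ (φ (rankOne u)).mulVec x := by
    simp [ampl2, dotProduct, mulVec, Fintype.sum_prod_type, Fin.sum_univ_two, ha, hb00]
  have h2 : star b ⬝ᵥ (ampl2 φ (rankOne ζ)).mulVec b = star z ⬝ᵥ (φ (rankOne v)).mulVec z := by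
    simp [ampl2, dotProduct, mulVec, Fintype.sum_prod_type, Fin.sum_univ_two, hb, hb11]
  have h3 : star a ⬝ᵥ (ampl2 φ (rankOne ζ)).mulVec b
      = star x ⬝ᵥ (φ (vecMulVec u (star v))).mulVec z := by
    simp [ampl2, dotProduct, mulVec, Fintype.sum_prod_type, Fin.sum_univ_two, ha, hb, hb01]
  have := psd_cs hpsd a b
  rwa [h1, h2, h3] at this

lemma two_copos_cs {m n : Type*} [Fintype m] [Fintype n]
    {φ : Matrix m m ℂ → Matrix n n ℂ} (h : Is2Copos φ) (u v : m → ℂ) (x z : n → ℂ) :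
    ‖star x ⬝ᵥ (φ (vecMulVec v (star u))).mulVec z‖ ^ 2 ≤
      (star x ⬝ᵥ (φ (rankOne u)).mulVec x).re * (star z ⬝ᵥ (φ (rankOne v)).mulVec z).re := by
  set ζ : Fin 2 × m → ℂ := fun p => ![u, v] p.1 p.2 with hζ
  have hpsd : (ampl2T φ (rankOne ζ)).PosSemidef := h _ (rankOne_posSemidef ζ)
  set a : Fin 2 × n → ℂ := fun p => ![x, 0] p.1 p.2 with ha
  set b : Fin 2 × n → ℂ := fun p => ![0, z] p.1 p.2 with hb
  have hb00 : (Matrix.of fun (i j : m) => rankOne ζ ((0 : Fin 2), i) ((0 : Fin 2), j)) = rankOne u := by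
    ext i j; simp [rankOne, vecMulVec, hζ]
  have hb10 : (Matrix.of fun (i j : m) => rankOne ζ ((1 : Fin 2), i) ((0 : Fin 2), j))
      = vecMulVec v (star u) := by
    ext i j; simp [rankOne, vecMulVec, hζ]
  have hb11 : (Matrix.of fun (i j : m) => rankOne ζ ((1 : Fin 2), i) ((1 : Fin 2), j)) = rankOne v := by
    ext i j; simp [rankOne, vecMulVec, hζ]
  have h1 : star a ⬝ᵥ (ampl2T φ (rankOne ζ)).mulVec a = star x ⬝ᵥ (φ (rankOne u)).mulVec x := by
    simp [ampl2T, dotProduct, mulVec, Fintype.sum_prod_type, Fin.sum_univ_two, ha, hb00]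
  have h2 : star b ⬝ᵥ (ampl2T φ (rankOne ζ)).mulVec b = star z ⬝ᵥ (φ (rankOne v)).mulVec z := by
    simp [ampl2T, dotProduct, mulVec, Fintype.sum_prod_type, Fin.sum_univ_two, hb, hb11]
  have h3 : star a ⬝ᵥ (ampl2T φ (rankOne ζ)).mulVec b
      = star x ⬝ᵥ (φ (vecMulVec v (star u))).mulVec z := by
    simp [ampl2T, dotProduct, mulVec, Fintype.sum_prod_type, Fin.sum_univ_two, ha, hb, hb10]
  have := psd_cs hpsd a b
  rwa [h1, h2, h3] at this

/-- generic vector on `TI a b` -/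
def sel3 {a b : ℕ} (f : Fin a → ℂ) (g : Fin b → ℂ) (c : ℂ) : TI a b → ℂ :=
  Sum.elim f (Sum.elim g fun _ => c)

lemma conj_dot {k h : ℕ} (B : Matrix (Fin h) (Fin k) ℂ) (y : Fin h → ℂ) (η : Fin k → ℂ) :
    Matrix.vecMul (star η) Bᴴ ⬝ᵥ y = (starRingEnd ℂ) (star y ⬝ᵥ B.mulVec η) := by
  rw [← Complex.star_def, star_dotProduct, star_star, Matrix.star_mulVec,
    ← Matrix.dotProduct_mulVec, Matrix.mulVec_conjTranspose]

lemma conj_dot' {k h : ℕ} (C : Matrix (Fin h) (Fin k) ℂ) (y : Fin h → ℂ) (η : Fin k → ℂ) :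
    Matrix.vecMul η Cᴴ ⬝ᵥ y = (starRingEnd ℂ) (star y ⬝ᵥ C.mulVec (star η)) := by
  simpa using conj_dot C y (star η)

lemma vecMulVec_zero_left {I J : Type*} (w : J → ℂ) : vecMulVec (0 : I → ℂ) w = 0 := by
  ext i j; simp [vecMulVec]

lemma vecMulVec_zero_right {I J : Type*} (v : I → ℂ) : vecMulVec v (0 : J → ℂ) = 0 := by
  ext i j; simp [vecMulVec]

section blocks
variable {a b : ℕ} (u₁ : Fin a → ℂ) (u₂ : Fin b → ℂ) (uc : ℂ)
  (v₁ : Fin a → ℂ) (v₂ : Fin b → ℂ) (vc : ℂ)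

lemma blk11_vmv : blk11 (vecMulVec (sel3 u₁ u₂ uc) (star (sel3 v₁ v₂ vc)))
    = vecMulVec u₁ (star v₁) := by ext i j; simp [blk11, vecMulVec, sel3]
lemma blk22_vmv : blk22 (vecMulVec (sel3 u₁ u₂ uc) (star (sel3 v₁ v₂ vc)))
    = vecMulVec u₂ (star v₂) := by ext i j; simp [blk22, vecMulVec, sel3]
lemma blk13_vmv : blk13 (vecMulVec (sel3 u₁ u₂ uc) (star (sel3 v₁ v₂ vc)))
    = (starRingEnd ℂ) vc • u₁ := by funext i; simp [blk13, vecMulVec, sel3, tidx, mul_comm]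
lemma blk31_vmv : blk31 (vecMulVec (sel3 u₁ u₂ uc) (star (sel3 v₁ v₂ vc)))
    = uc • star v₁ := by funext i; simp [blk31, vecMulVec, sel3, tidx]
lemma blk23_vmv : blk23 (vecMulVec (sel3 u₁ u₂ uc) (star (sel3 v₁ v₂ vc)))
    = (starRingEnd ℂ) vc • u₂ := by funext i; simp [blk23, vecMulVec, sel3, tidx, mul_comm]
lemma blk32_vmv : blk32 (vecMulVec (sel3 u₁ u₂ uc) (star (sel3 v₁ v₂ vc)))
    = uc • star v₂ := by funext i; simp [blk32, vecMulVec, sel3, tidx]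
lemma corner_vmv : (vecMulVec (sel3 u₁ u₂ uc) (star (sel3 v₁ v₂ vc))) tidx tidx
    = uc * (starRingEnd ℂ) vc := by simp [vecMulVec, sel3, tidx]
end blocks

lemma quad_merging {k₁ k₂ h₁ h₂ : ℕ}
    (φ₁ : Matrix (Fin k₁) (Fin k₁) ℂ →ₗ[ℂ] Matrix (Fin h₁) (Fin h₁) ℂ)
    (φ₂ : Matrix (Fin k₂) (Fin k₂) ℂ →ₗ[ℂ] Matrix (Fin h₂) (Fin h₂) ℂ)
    (B₁ C₁ : Matrix (Fin h₁) (Fin k₁) ℂ) (B₂ C₂ : Matrix (Fin h₂) (Fin k₂) ℂ)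
    (ω₁ : Matrix (Fin k₁) (Fin k₁) ℂ →ₗ[ℂ] ℂ) (ω₂ : Matrix (Fin k₂) (Fin k₂) ℂ →ₗ[ℂ] ℂ)
    (P₁ : Matrix (Fin h₁) (Fin h₁) ℂ) (P₂ : Matrix (Fin h₂) (Fin h₂) ℂ)
    (X : Matrix (TI k₁ k₂) (TI k₁ k₂) ℂ)
    (x₁ : Fin h₁ → ℂ) (x₂ : Fin h₂ → ℂ) (xc : ℂ)
    (z₁ : Fin h₁ → ℂ) (z₂ : Fin h₂ → ℂ) (zc : ℂ) :
    star (sel3 x₁ x₂ xc) ⬝ᵥ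
      ((merging φ₁ φ₂ B₁ C₁ B₂ C₂ ω₁ ω₂ P₁ P₂ X).mulVec (sel3 z₁ z₂ zc)) =
      star x₁ ⬝ᵥ (φ₁ (blk11 X)).mulVec z₁ + ω₂ (blk22 X) * (star x₁ ⬝ᵥ P₁.mulVec z₁)
      + star x₂ ⬝ᵥ (φ₂ (blk22 X)).mulVec z₂ + ω₁ (blk11 X) * (star x₂ ⬝ᵥ P₂.mulVec z₂)
      + (star x₁ ⬝ᵥ (B₁.mulVec (blk13 X) + C₁.mulVec (blk31 X))) * zc
      + (star x₂ ⬝ᵥ (B₂.mulVec (blk23 X) + C₂.mulVec (blk32 X))) * zc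
      + (starRingEnd ℂ) xc * ((Matrix.vecMul (blk31 X) B₁ᴴ + Matrix.vecMul (blk13 X) C₁ᴴ) ⬝ᵥ z₁)
      + (starRingEnd ℂ) xc * ((Matrix.vecMul (blk32 X) B₂ᴴ + Matrix.vecMul (blk23 X) C₂ᴴ) ⬝ᵥ z₂)
      + (starRingEnd ℂ) xc * X tidx tidx * zc := by
  simp only [dotProduct, mulVec, Fintype.sum_sum_type, Finset.univ_unique, Finset.sum_singleton,
    merging, sel3, Matrix.of_apply, Sum.elim_inl, Sum.elim_inr, Pi.star_apply, Pi.add_apply,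
    Complex.star_def, mul_zero, zero_mul, add_zero, zero_add, Finset.sum_const_zero,
    Finset.mul_sum, Finset.sum_add_distrib, mul_add, add_mul]
  simp only [Finset.mul_sum, Finset.sum_mul]
  ring_nf
  simp only [mul_comm, mul_left_comm, mul_assoc]
  ring

lemma real_finish {m₁ m₂ e₁ e₂ : ℝ} (he₁ : 0 ≤ e₁) (he₂ : 0 ≤ e₂)
    (hD₁ : 0 ≤ m₁ - e₁ ^ 2) (hD₂ : 0 ≤ m₂ - e₂ ^ 2)
    (hkey : (e₁ * e₂) ^ 2 ≤ (m₁ - e₁ ^ 2) * (m₂ - e₂ ^ 2)) :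
    e₁ * e₂ ≤ Real.sqrt (m₁ - e₁ ^ 2) * Real.sqrt (m₂ - e₂ ^ 2) := by
  rw [← Real.sqrt_mul hD₁]
  calc e₁ * e₂ = Real.sqrt ((e₁ * e₂) ^ 2) := (Real.sqrt_sq (by positivity)).symm
  _ ≤ _ := Real.sqrt_le_sqrt hkey

end Aux
-- AUX END

/-- If a positive merging is 2-positive then `C₁ = C₂ = 0` and
`δ₁δ₂ ≥ ε₁ε₂`; analogously, if it is 2-copositive then `B₁ = B₂ = 0` and the
same inequality holds. -/
theorem statement5 {k₁ k₂ h₁ h₂ : ℕ}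
    (φ₁ : Matrix (Fin k₁) (Fin k₁) ℂ →ₗ[ℂ] Matrix (Fin h₁) (Fin h₁) ℂ)
    (φ₂ : Matrix (Fin k₂) (Fin k₂) ℂ →ₗ[ℂ] Matrix (Fin h₂) (Fin h₂) ℂ)
    (hφ₁ : IsPosMap ⇑φ₁) (hφ₂ : IsPosMap ⇑φ₂)
    (B₁ C₁ : Matrix (Fin h₁) (Fin k₁) ℂ) (B₂ C₂ : Matrix (Fin h₂) (Fin k₂) ℂ)
    (ω₁ : Matrix (Fin k₁) (Fin k₁) ℂ →ₗ[ℂ] ℂ) (ω₂ : Matrix (Fin k₂) (Fin k₂) ℂ →ₗ[ℂ] ℂ)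
    (P₁ : Matrix (Fin h₁) (Fin h₁) ℂ) (P₂ : Matrix (Fin h₂) (Fin h₂) ℂ)
    (hP₁ : IsOrthProjOnRange P₁ (φ₁ 1)) (hP₂ : IsOrthProjOnRange P₂ (φ₂ 1))
    (hpos : IsPosMap (merging φ₁ φ₂ B₁ C₁ B₂ C₂ ω₁ ω₂ P₁ P₂)) :
    (Is2Pos (merging φ₁ φ₂ B₁ C₁ B₂ C₂ ω₁ ω₂ P₁ P₂) →
      (C₁ = 0 ∧ C₂ = 0) ∧
        ∀ (η₁ : Fin k₁ → ℂ) (y₁ : Fin h₁ → ℂ) (η₂ : Fin k₂ → ℂ) (y₂ : Fin h₂ → ℂ),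
          epsQ B₁ C₁ η₁ y₁ * epsQ B₂ C₂ η₂ y₂ ≤
            deltaQ φ₁ B₁ C₁ η₁ y₁ * deltaQ φ₂ B₂ C₂ η₂ y₂) ∧
    (Is2Copos (merging φ₁ φ₂ B₁ C₁ B₂ C₂ ω₁ ω₂ P₁ P₂) →
      (B₁ = 0 ∧ B₂ = 0) ∧
        ∀ (η₁ : Fin k₁ → ℂ) (y₁ : Fin h₁ → ℂ) (η₂ : Fin k₂ → ℂ) (y₂ : Fin h₂ → ℂ),
          epsQ B₁ C₁ η₁ y₁ * epsQ B₂ C₂ η₂ y₂ ≤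
            deltaQ φ₁ B₁ C₁ η₁ y₁ * deltaQ φ₂ B₂ C₂ η₂ y₂) := by
  constructor
  · -- 2-positive case
    intro h2
    -- C₁ = 0
    have hvan1 : ∀ (η : Fin k₁ → ℂ) (y : Fin h₁ → ℂ), star y ⬝ᵥ C₁.mulVec (star η) = 0 := by
      intro η y
      have hcs := two_pos_cs h2 (sel3 (0 : Fin k₁ → ℂ) (0 : Fin k₂ → ℂ) 1)
        (sel3 η (0 : Fin k₂ → ℂ) 0) (sel3 y (0 : Fin h₂ → ℂ) 0) (sel3 (0 : Fin h₁ → ℂ) (0 : Fin h₂ → ℂ) 1)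
      have ev : star (sel3 y (0 : Fin h₂ → ℂ) 0) ⬝ᵥ
          ((merging φ₁ φ₂ B₁ C₁ B₂ C₂ ω₁ ω₂ P₁ P₂
            (vecMulVec (sel3 (0 : Fin k₁ → ℂ) (0 : Fin k₂ → ℂ) 1)
              (star (sel3 η (0 : Fin k₂ → ℂ) 0)))).mulVec
            (sel3 (0 : Fin h₁ → ℂ) (0 : Fin h₂ → ℂ) 1)) = star y ⬝ᵥ C₁.mulVec (star η) := by
        rw [quad_merging]
        simp [blk11_vmv, blk22_vmv, blk13_vmv, blk31_vmv, blk23_vmv, blk32_vmv, corner_vmv,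
          vecMulVec_zero_left, vecMulVec_zero_right]
      have ea : star (sel3 y (0 : Fin h₂ → ℂ) 0) ⬝ᵥ
          ((merging φ₁ φ₂ B₁ C₁ B₂ C₂ ω₁ ω₂ P₁ P₂
            (rankOne (sel3 (0 : Fin k₁ → ℂ) (0 : Fin k₂ → ℂ) 1))).mulVec
            (sel3 y (0 : Fin h₂ → ℂ) 0)) = 0 := by
        simp only [rankOne]
        rw [quad_merging]
        simp [blk11_vmv, blk22_vmv, blk13_vmv, blk31_vmv, blk23_vmv, blk32_vmv, corner_vmv,
          vecMulVec_zero_left, vecMulVec_zero_right]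
      rw [ev, ea] at hcs
      simp only [Complex.zero_re, zero_mul] at hcs
      have h0 : ‖star y ⬝ᵥ C₁.mulVec (star η)‖ = 0 := by
        nlinarith [norm_nonneg (star y ⬝ᵥ C₁.mulVec (star η))]
      exact norm_eq_zero.mp h0
    have hvan2 : ∀ (η : Fin k₂ → ℂ) (y : Fin h₂ → ℂ), star y ⬝ᵥ C₂.mulVec (star η) = 0 := by
      intro η y
      have hcs := two_pos_cs h2 (sel3 (0 : Fin k₁ → ℂ) (0 : Fin k₂ → ℂ) 1)
        (sel3 (0 : Fin k₁ → ℂ) η 0) (sel3 (0 : Fin h₁ → ℂ) y 0) (sel3 (0 : Fin h₁ → ℂ) (0 : Fin h₂ → ℂ) 1)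
      have ev : star (sel3 (0 : Fin h₁ → ℂ) y 0) ⬝ᵥ
          ((merging φ₁ φ₂ B₁ C₁ B₂ C₂ ω₁ ω₂ P₁ P₂
            (vecMulVec (sel3 (0 : Fin k₁ → ℂ) (0 : Fin k₂ → ℂ) 1)
              (star (sel3 (0 : Fin k₁ → ℂ) η 0)))).mulVec
            (sel3 (0 : Fin h₁ → ℂ) (0 : Fin h₂ → ℂ) 1)) = star y ⬝ᵥ C₂.mulVec (star η) := by
        rw [quad_merging]
        simp [blk11_vmv, blk22_vmv, blk13_vmv, blk31_vmv, blk23_vmv, blk32_vmv, corner_vmv,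
          vecMulVec_zero_left, vecMulVec_zero_right]
      have ea : star (sel3 (0 : Fin h₁ → ℂ) y 0) ⬝ᵥ
          ((merging φ₁ φ₂ B₁ C₁ B₂ C₂ ω₁ ω₂ P₁ P₂
            (rankOne (sel3 (0 : Fin k₁ → ℂ) (0 : Fin k₂ → ℂ) 1))).mulVec
            (sel3 (0 : Fin h₁ → ℂ) y 0)) = 0 := by
        simp only [rankOne]
        rw [quad_merging]
        simp [blk11_vmv, blk22_vmv, blk13_vmv, blk31_vmv, blk23_vmv, blk32_vmv, corner_vmv,
          vecMulVec_zero_left, vecMulVec_zero_right]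
      rw [ev, ea] at hcs
      simp only [Complex.zero_re, zero_mul] at hcs
      have h0 : ‖star y ⬝ᵥ C₂.mulVec (star η)‖ = 0 := by
        nlinarith [norm_nonneg (star y ⬝ᵥ C₂.mulVec (star η))]
      exact norm_eq_zero.mp h0
    have hC1 : C₁ = 0 := by
      ext i j
      have h := hvan1 (Pi.single j 1) (Pi.single i 1)
      simpa [dotProduct, mulVec, Pi.single_apply, apply_ite, Finset.sum_ite_eq,
        Finset.sum_ite_eq'] using h
    have hC2 : C₂ = 0 := by
      ext i j
      have h := hvan2 (Pi.single j 1) (Pi.single i 1)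
      simpa [dotProduct, mulVec, Pi.single_apply, apply_ite, Finset.sum_ite_eq,
        Finset.sum_ite_eq'] using h
    subst hC1; subst hC2
    refine ⟨⟨rfl, rfl⟩, ?_⟩
    intro η₁ y₁ η₂ y₂
    set β₁ := star y₁ ⬝ᵥ B₁.mulVec η₁ with hβ₁
    set β₂ := star y₂ ⬝ᵥ B₂.mulVec η₂ with hβ₂
    have hcs := two_pos_cs h2 (sel3 η₁ (0 : Fin k₂ → ℂ) 1) (sel3 (0 : Fin k₁ → ℂ) η₂ 1)
      (sel3 y₁ (0 : Fin h₂ → ℂ) (-(starRingEnd ℂ) β₁)) (sel3 (0 : Fin h₁ → ℂ) y₂ (-(starRingEnd ℂ) β₂))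
    have eA : star (sel3 y₁ (0 : Fin h₂ → ℂ) (-(starRingEnd ℂ) β₁)) ⬝ᵥ
        ((merging φ₁ φ₂ B₁ 0 B₂ 0 ω₁ ω₂ P₁ P₂ (rankOne (sel3 η₁ (0 : Fin k₂ → ℂ) 1))).mulVec
          (sel3 y₁ (0 : Fin h₂ → ℂ) (-(starRingEnd ℂ) β₁)))
        = star y₁ ⬝ᵥ (φ₁ (rankOne η₁)).mulVec y₁ - β₁ * (starRingEnd ℂ) β₁ := by
      simp only [rankOne]
      rw [quad_merging]
      simp [blk11_vmv, blk22_vmv, blk13_vmv, blk31_vmv, blk23_vmv, blk32_vmv, corner_vmv,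
        vecMulVec_zero_left, vecMulVec_zero_right, conj_dot', ← hβ₁]
      ring
    have eC : star (sel3 (0 : Fin h₁ → ℂ) y₂ (-(starRingEnd ℂ) β₂)) ⬝ᵥ
        ((merging φ₁ φ₂ B₁ 0 B₂ 0 ω₁ ω₂ P₁ P₂ (rankOne (sel3 (0 : Fin k₁ → ℂ) η₂ 1))).mulVec
          (sel3 (0 : Fin h₁ → ℂ) y₂ (-(starRingEnd ℂ) β₂)))
        = star y₂ ⬝ᵥ (φ₂ (rankOne η₂)).mulVec y₂ - β₂ * (starRingEnd ℂ) β₂ := by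
      simp only [rankOne]
      rw [quad_merging]
      simp [blk11_vmv, blk22_vmv, blk13_vmv, blk31_vmv, blk23_vmv, blk32_vmv, corner_vmv,
        vecMulVec_zero_left, vecMulVec_zero_right, conj_dot', ← hβ₂]
      ring
    have eX : star (sel3 y₁ (0 : Fin h₂ → ℂ) (-(starRingEnd ℂ) β₁)) ⬝ᵥ
        ((merging φ₁ φ₂ B₁ 0 B₂ 0 ω₁ ω₂ P₁ P₂
          (vecMulVec (sel3 η₁ (0 : Fin k₂ → ℂ) 1) (star (sel3 (0 : Fin k₁ → ℂ) η₂ 1)))).mulVec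
          (sel3 (0 : Fin h₁ → ℂ) y₂ (-(starRingEnd ℂ) β₂)))
        = -(β₁ * (starRingEnd ℂ) β₂) := by
      rw [quad_merging]
      simp [blk11_vmv, blk22_vmv, blk13_vmv, blk31_vmv, blk23_vmv, blk32_vmv, corner_vmv,
        vecMulVec_zero_left, vecMulVec_zero_right, conj_dot', ← hβ₁, ← hβ₂]
    rw [eA, eC, eX] at hcs
    have hre1 : (star y₁ ⬝ᵥ (φ₁ (rankOne η₁)).mulVec y₁ - β₁ * (starRingEnd ℂ) β₁).re
        = (star y₁ ⬝ᵥ (φ₁ (rankOne η₁)).mulVec y₁).re - ‖β₁‖ ^ 2 := by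
      rw [Complex.sub_re, Complex.mul_conj, Complex.normSq_eq_norm_sq, Complex.ofReal_re]
    have hre2 : (star y₂ ⬝ᵥ (φ₂ (rankOne η₂)).mulVec y₂ - β₂ * (starRingEnd ℂ) β₂).re
        = (star y₂ ⬝ᵥ (φ₂ (rankOne η₂)).mulVec y₂).re - ‖β₂‖ ^ 2 := by
      rw [Complex.sub_re, Complex.mul_conj, Complex.normSq_eq_norm_sq, Complex.ofReal_re]
    have habsX : ‖-(β₁ * (starRingEnd ℂ) β₂)‖ = ‖β₁‖ * ‖β₂‖ := by
      simp [Complex.norm_conj]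
    rw [hre1, hre2, habsX] at hcs
    -- nonnegativity of the diagonal terms
    have hD₁ : 0 ≤ (star y₁ ⬝ᵥ (φ₁ (rankOne η₁)).mulVec y₁).re - ‖β₁‖ ^ 2 := by
      have h := (Complex.le_def.mp ((hpos _ (rankOne_posSemidef (sel3 η₁ (0 : Fin k₂ → ℂ) 1))).dotProduct_mulVec_nonneg
        (sel3 y₁ (0 : Fin h₂ → ℂ) (-(starRingEnd ℂ) β₁)))).1
      rwa [eA, hre1] at h
    have hD₂ : 0 ≤ (star y₂ ⬝ᵥ (φ₂ (rankOne η₂)).mulVec y₂).re - ‖β₂‖ ^ 2 := by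
      have h := (Complex.le_def.mp ((hpos _ (rankOne_posSemidef (sel3 (0 : Fin k₁ → ℂ) η₂ 1))).dotProduct_mulVec_nonneg
        (sel3 (0 : Fin h₁ → ℂ) y₂ (-(starRingEnd ℂ) β₂)))).1
      rwa [eC, hre2] at h
    have hm₁ : 0 ≤ (star y₁ ⬝ᵥ (φ₁ (rankOne η₁)).mulVec y₁).re :=
      (Complex.le_def.mp ((hφ₁ _ (rankOne_posSemidef η₁)).dotProduct_mulVec_nonneg y₁)).1
    have hm₂ : 0 ≤ (star y₂ ⬝ᵥ (φ₂ (rankOne η₂)).mulVec y₂).re :=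
      (Complex.le_def.mp ((hφ₂ _ (rankOne_posSemidef η₂)).dotProduct_mulVec_nonneg y₂)).1
    have heps1 : epsQ B₁ 0 η₁ y₁ = ‖β₁‖ := by simp [epsQ, hβ₁]
    have heps2 : epsQ B₂ 0 η₂ y₂ = ‖β₂‖ := by simp [epsQ, hβ₂]
    have hdel1 : deltaQ φ₁ B₁ 0 η₁ y₁
        = Real.sqrt ((star y₁ ⬝ᵥ (φ₁ (rankOne η₁)).mulVec y₁).re - ‖β₁‖ ^ 2) := by
      rw [deltaQ, heps1, muQ, Real.sq_sqrt hm₁]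
    have hdel2 : deltaQ φ₂ B₂ 0 η₂ y₂
        = Real.sqrt ((star y₂ ⬝ᵥ (φ₂ (rankOne η₂)).mulVec y₂).re - ‖β₂‖ ^ 2) := by
      rw [deltaQ, heps2, muQ, Real.sq_sqrt hm₂]
    rw [heps1, heps2, hdel1, hdel2]
    exact real_finish (norm_nonneg _) (norm_nonneg _) hD₁ hD₂ hcs
  · -- 2-copositive case
    intro h2
    have hvan1 : ∀ (η : Fin k₁ → ℂ) (y : Fin h₁ → ℂ), star y ⬝ᵥ B₁.mulVec η = 0 := by
      intro η y
      have hcs := two_copos_cs h2 (sel3 (0 : Fin k₁ → ℂ) (0 : Fin k₂ → ℂ) 1)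
        (sel3 η (0 : Fin k₂ → ℂ) 0) (sel3 y (0 : Fin h₂ → ℂ) 0) (sel3 (0 : Fin h₁ → ℂ) (0 : Fin h₂ → ℂ) 1)
      have ev : star (sel3 y (0 : Fin h₂ → ℂ) 0) ⬝ᵥ
          ((merging φ₁ φ₂ B₁ C₁ B₂ C₂ ω₁ ω₂ P₁ P₂
            (vecMulVec (sel3 η (0 : Fin k₂ → ℂ) 0)
              (star (sel3 (0 : Fin k₁ → ℂ) (0 : Fin k₂ → ℂ) 1)))).mulVec
            (sel3 (0 : Fin h₁ → ℂ) (0 : Fin h₂ → ℂ) 1)) = star y ⬝ᵥ B₁.mulVec η := by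
        rw [quad_merging]
        simp [blk11_vmv, blk22_vmv, blk13_vmv, blk31_vmv, blk23_vmv, blk32_vmv, corner_vmv,
          vecMulVec_zero_left, vecMulVec_zero_right]
      have ea : star (sel3 y (0 : Fin h₂ → ℂ) 0) ⬝ᵥ
          ((merging φ₁ φ₂ B₁ C₁ B₂ C₂ ω₁ ω₂ P₁ P₂
            (rankOne (sel3 (0 : Fin k₁ → ℂ) (0 : Fin k₂ → ℂ) 1))).mulVec
            (sel3 y (0 : Fin h₂ → ℂ) 0)) = 0 := by
        simp only [rankOne]
        rw [quad_merging]
        simp [blk11_vmv, blk22_vmv, blk13_vmv, blk31_vmv, blk23_vmv, blk32_vmv, corner_vmv,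
          vecMulVec_zero_left, vecMulVec_zero_right]
      rw [ev, ea] at hcs
      simp only [Complex.zero_re, zero_mul] at hcs
      have h0 : ‖star y ⬝ᵥ B₁.mulVec η‖ = 0 := by
        nlinarith [norm_nonneg (star y ⬝ᵥ B₁.mulVec η)]
      exact norm_eq_zero.mp h0
    have hvan2 : ∀ (η : Fin k₂ → ℂ) (y : Fin h₂ → ℂ), star y ⬝ᵥ B₂.mulVec η = 0 := by
      intro η y
      have hcs := two_copos_cs h2 (sel3 (0 : Fin k₁ → ℂ) (0 : Fin k₂ → ℂ) 1)
        (sel3 (0 : Fin k₁ → ℂ) η 0) (sel3 (0 : Fin h₁ → ℂ) y 0) (sel3 (0 : Fin h₁ → ℂ) (0 : Fin h₂ → ℂ) 1)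
      have ev : star (sel3 (0 : Fin h₁ → ℂ) y 0) ⬝ᵥ
          ((merging φ₁ φ₂ B₁ C₁ B₂ C₂ ω₁ ω₂ P₁ P₂
            (vecMulVec (sel3 (0 : Fin k₁ → ℂ) η 0)
              (star (sel3 (0 : Fin k₁ → ℂ) (0 : Fin k₂ → ℂ) 1)))).mulVec
            (sel3 (0 : Fin h₁ → ℂ) (0 : Fin h₂ → ℂ) 1)) = star y ⬝ᵥ B₂.mulVec η := by
        rw [quad_merging]
        simp [blk11_vmv, blk22_vmv, blk13_vmv, blk31_vmv, blk23_vmv, blk32_vmv, corner_vmv,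
          vecMulVec_zero_left, vecMulVec_zero_right]
      have ea : star (sel3 (0 : Fin h₁ → ℂ) y 0) ⬝ᵥ
          ((merging φ₁ φ₂ B₁ C₁ B₂ C₂ ω₁ ω₂ P₁ P₂
            (rankOne (sel3 (0 : Fin k₁ → ℂ) (0 : Fin k₂ → ℂ) 1))).mulVec
            (sel3 (0 : Fin h₁ → ℂ) y 0)) = 0 := by
        simp only [rankOne]
        rw [quad_merging]
        simp [blk11_vmv, blk22_vmv, blk13_vmv, blk31_vmv, blk23_vmv, blk32_vmv, corner_vmv,
          vecMulVec_zero_left, vecMulVec_zero_right]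
      rw [ev, ea] at hcs
      simp only [Complex.zero_re, zero_mul] at hcs
      have h0 : ‖star y ⬝ᵥ B₂.mulVec η‖ = 0 := by
        nlinarith [norm_nonneg (star y ⬝ᵥ B₂.mulVec η)]
      exact norm_eq_zero.mp h0
    have hB1 : B₁ = 0 := by
      ext i j
      have h := hvan1 (Pi.single j 1) (Pi.single i 1)
      simpa [dotProduct, mulVec, Pi.single_apply, apply_ite, Finset.sum_ite_eq,
        Finset.sum_ite_eq'] using h
    have hB2 : B₂ = 0 := by
      ext i j
      have h := hvan2 (Pi.single j 1) (Pi.single i 1)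
      simpa [dotProduct, mulVec, Pi.single_apply, apply_ite, Finset.sum_ite_eq,
        Finset.sum_ite_eq'] using h
    subst hB1; subst hB2
    refine ⟨⟨rfl, rfl⟩, ?_⟩
    intro η₁ y₁ η₂ y₂
    set γ₁ := star y₁ ⬝ᵥ C₁.mulVec (star η₁) with hγ₁
    set γ₂ := star y₂ ⬝ᵥ C₂.mulVec (star η₂) with hγ₂
    have hcs := two_copos_cs h2 (sel3 η₁ (0 : Fin k₂ → ℂ) 1) (sel3 (0 : Fin k₁ → ℂ) η₂ 1)
      (sel3 y₁ (0 : Fin h₂ → ℂ) (-(starRingEnd ℂ) γ₁)) (sel3 (0 : Fin h₁ → ℂ) y₂ (-(starRingEnd ℂ) γ₂))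
    have eA : star (sel3 y₁ (0 : Fin h₂ → ℂ) (-(starRingEnd ℂ) γ₁)) ⬝ᵥ
        ((merging φ₁ φ₂ 0 C₁ 0 C₂ ω₁ ω₂ P₁ P₂ (rankOne (sel3 η₁ (0 : Fin k₂ → ℂ) 1))).mulVec
          (sel3 y₁ (0 : Fin h₂ → ℂ) (-(starRingEnd ℂ) γ₁)))
        = star y₁ ⬝ᵥ (φ₁ (rankOne η₁)).mulVec y₁ - γ₁ * (starRingEnd ℂ) γ₁ := by
      simp only [rankOne]
      rw [quad_merging]
      simp [blk11_vmv, blk22_vmv, blk13_vmv, blk31_vmv, blk23_vmv, blk32_vmv, corner_vmv,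
        vecMulVec_zero_left, vecMulVec_zero_right, conj_dot', ← hγ₁]
      ring
    have eC : star (sel3 (0 : Fin h₁ → ℂ) y₂ (-(starRingEnd ℂ) γ₂)) ⬝ᵥ
        ((merging φ₁ φ₂ 0 C₁ 0 C₂ ω₁ ω₂ P₁ P₂ (rankOne (sel3 (0 : Fin k₁ → ℂ) η₂ 1))).mulVec
          (sel3 (0 : Fin h₁ → ℂ) y₂ (-(starRingEnd ℂ) γ₂)))
        = star y₂ ⬝ᵥ (φ₂ (rankOne η₂)).mulVec y₂ - γ₂ * (starRingEnd ℂ) γ₂ := by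
      simp only [rankOne]
      rw [quad_merging]
      simp [blk11_vmv, blk22_vmv, blk13_vmv, blk31_vmv, blk23_vmv, blk32_vmv, corner_vmv,
        vecMulVec_zero_left, vecMulVec_zero_right, conj_dot', ← hγ₂]
      ring
    have eX : star (sel3 y₁ (0 : Fin h₂ → ℂ) (-(starRingEnd ℂ) γ₁)) ⬝ᵥ
        ((merging φ₁ φ₂ 0 C₁ 0 C₂ ω₁ ω₂ P₁ P₂
          (vecMulVec (sel3 (0 : Fin k₁ → ℂ) η₂ 1) (star (sel3 η₁ (0 : Fin k₂ → ℂ) 1)))).mulVec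
          (sel3 (0 : Fin h₁ → ℂ) y₂ (-(starRingEnd ℂ) γ₂)))
        = -(γ₁ * (starRingEnd ℂ) γ₂) := by
      rw [quad_merging]
      simp [blk11_vmv, blk22_vmv, blk13_vmv, blk31_vmv, blk23_vmv, blk32_vmv, corner_vmv,
        vecMulVec_zero_left, vecMulVec_zero_right, conj_dot', ← hγ₁, ← hγ₂]
    rw [eA, eC, eX] at hcs
    have hre1 : (star y₁ ⬝ᵥ (φ₁ (rankOne η₁)).mulVec y₁ - γ₁ * (starRingEnd ℂ) γ₁).re
        = (star y₁ ⬝ᵥ (φ₁ (rankOne η₁)).mulVec y₁).re - ‖γ₁‖ ^ 2 := by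
      rw [Complex.sub_re, Complex.mul_conj, Complex.normSq_eq_norm_sq, Complex.ofReal_re]
    have hre2 : (star y₂ ⬝ᵥ (φ₂ (rankOne η₂)).mulVec y₂ - γ₂ * (starRingEnd ℂ) γ₂).re
        = (star y₂ ⬝ᵥ (φ₂ (rankOne η₂)).mulVec y₂).re - ‖γ₂‖ ^ 2 := by
      rw [Complex.sub_re, Complex.mul_conj, Complex.normSq_eq_norm_sq, Complex.ofReal_re]
    have habsX : ‖-(γ₁ * (starRingEnd ℂ) γ₂)‖ = ‖γ₁‖ * ‖γ₂‖ := by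
      simp [Complex.norm_conj]
    rw [hre1, hre2, habsX] at hcs
    have hD₁ : 0 ≤ (star y₁ ⬝ᵥ (φ₁ (rankOne η₁)).mulVec y₁).re - ‖γ₁‖ ^ 2 := by
      have h := (Complex.le_def.mp ((hpos _ (rankOne_posSemidef (sel3 η₁ (0 : Fin k₂ → ℂ) 1))).dotProduct_mulVec_nonneg
        (sel3 y₁ (0 : Fin h₂ → ℂ) (-(starRingEnd ℂ) γ₁)))).1
      rwa [eA, hre1] at h
    have hD₂ : 0 ≤ (star y₂ ⬝ᵥ (φ₂ (rankOne η₂)).mulVec y₂).re - ‖γ₂‖ ^ 2 := by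
      have h := (Complex.le_def.mp ((hpos _ (rankOne_posSemidef (sel3 (0 : Fin k₁ → ℂ) η₂ 1))).dotProduct_mulVec_nonneg
        (sel3 (0 : Fin h₁ → ℂ) y₂ (-(starRingEnd ℂ) γ₂)))).1
      rwa [eC, hre2] at h
    have hm₁ : 0 ≤ (star y₁ ⬝ᵥ (φ₁ (rankOne η₁)).mulVec y₁).re :=
      (Complex.le_def.mp ((hφ₁ _ (rankOne_posSemidef η₁)).dotProduct_mulVec_nonneg y₁)).1
    have hm₂ : 0 ≤ (star y₂ ⬝ᵥ (φ₂ (rankOne η₂)).mulVec y₂).re :=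
      (Complex.le_def.mp ((hφ₂ _ (rankOne_posSemidef η₂)).dotProduct_mulVec_nonneg y₂)).1
    have heps1 : epsQ 0 C₁ η₁ y₁ = ‖γ₁‖ := by simp [epsQ, hγ₁]
    have heps2 : epsQ 0 C₂ η₂ y₂ = ‖γ₂‖ := by simp [epsQ, hγ₂]
    have hdel1 : deltaQ φ₁ 0 C₁ η₁ y₁
        = Real.sqrt ((star y₁ ⬝ᵥ (φ₁ (rankOne η₁)).mulVec y₁).re - ‖γ₁‖ ^ 2) := by
      rw [deltaQ, heps1, muQ, Real.sq_sqrt hm₁]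
    have hdel2 : deltaQ φ₂ 0 C₂ η₂ y₂
        = Real.sqrt ((star y₂ ⬝ᵥ (φ₂ (rankOne η₂)).mulVec y₂).re - ‖γ₂‖ ^ 2) := by
      rw [deltaQ, heps2, muQ, Real.sq_sqrt hm₂]
    rw [heps1, heps2, hdel1, hdel2]
    exact real_finish (norm_nonneg _) (norm_nonneg _) hD₁ hD₂ hcs


end Paper
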